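/- Let n ≥ 1 and N ≥ 1 be integers, and let μ be a Borel measure on ℂ^N for which there are constants C₀ > 0 and R > 0 with μ(B_ρ(w)) ≤ C₀ ρ^{2n} for every w ∈ ℂ^N and every 0 < ρ ≤ R. Then there exists a constant C > 0, depending only on n, N, C₀ and R, such that for every z ∈ ℂ^N one has ∫_{B_{1/2}(z)} dμ(ζ) / ( ‖ζ − z‖^{2n} · (log ‖ζ − z‖)² ) ≤ C. -/

import Mathlib

open MeasureTheory Metric
open scoped NNReal ENNReal

/-- Dyadic localization: every `t ∈ (0, 1/2)` lies in some dyadic interval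
`[(1/2)^(k+2), (1/2)^(k+1))`. -/
lemma exists_dyadic_interval {t : ℝ} (h0 : 0 < t) (h1 : t < 1 / 2) :
    ∃ k : ℕ, (1 / 2 : ℝ) ^ (k + 2) ≤ t ∧ t < (1 / 2 : ℝ) ^ (k + 1) := by
  have hex : ∃ m : ℕ, (1 / 2 : ℝ) ^ m ≤ t := by
    obtain ⟨m, hm⟩ := exists_pow_lt_of_lt_one h0 (by norm_num : (1 / 2 : ℝ) < 1)
    exact ⟨m, hm.le⟩
  have hspec := Nat.find_spec hex
  rcases hfind : Nat.find hex with _ | _ | k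
  · rw [hfind] at hspec; norm_num at hspec; linarith
  · rw [hfind] at hspec; norm_num at hspec; linarith
  · refine ⟨k, ?_, ?_⟩
    · rw [hfind] at hspec; exact hspec
    · have hmin := Nat.find_min hex (m := k + 1) (by omega)
      push_neg at hmin
      exact hmin

/-- Pointwise bound on the dyadic annulus. -/
lemma dyadic_pointwise_bound (n k : ℕ) (hn : 1 ≤ n) {t : ℝ}
    (h1 : (1 / 2 : ℝ) ^ (k + 2) ≤ t) (h2 : t < (1 / 2 : ℝ) ^ (k + 1)) :
    1 / (t ^ (2 * n) * Real.log t ^ 2) ≤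
      (2 : ℝ) ^ (2 * n * (k + 2)) / (((k : ℝ) + 1) ^ 2 * Real.log 2 ^ 2) := by
  have ht0 : 0 < t := lt_of_lt_of_le (by positivity) h1
  have hlog2 : 0 < Real.log 2 := Real.log_pos one_lt_two
  have ht1 : t < 1 / 2 := lt_of_lt_of_le h2 (by
    simpa using pow_le_pow_of_le_one (by norm_num : (0:ℝ) ≤ 1/2) (by norm_num)
      (by omega : 1 ≤ k + 1))
  have hlogt : Real.log t ≤ -(((k : ℝ) + 1) * Real.log 2) := by
    have hle : Real.log t ≤ Real.log ((1 / 2 : ℝ) ^ (k + 1)) :=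
      Real.log_le_log ht0 h2.le
    rw [Real.log_pow, one_div, Real.log_inv] at hle
    push_cast at hle ⊢
    linarith
  have hlogsq : ((k : ℝ) + 1) ^ 2 * Real.log 2 ^ 2 ≤ Real.log t ^ 2 := by
    have ha : (0:ℝ) ≤ ((k : ℝ) + 1) * Real.log 2 := by positivity
    have habs : ((k : ℝ) + 1) * Real.log 2 ≤ -Real.log t := by linarith
    nlinarith [pow_le_pow_left₀ ha habs 2]
  have hkey : (2 : ℝ) ^ (2 * n * (k + 2)) * ((1 / 2 : ℝ) ^ (k + 2)) ^ (2 * n) = 1 := by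
    have hh : ((1 / 2 : ℝ) ^ (k + 2)) ^ (2 * n) = ((2 : ℝ) ^ (2 * n * (k + 2)))⁻¹ := by
      rw [← pow_mul, mul_comm (k + 2) (2 * n), one_div, inv_pow]
    rw [hh]
    exact mul_inv_cancel₀ (by positivity)
  have h2t : 1 ≤ (2 : ℝ) ^ (2 * n * (k + 2)) * t ^ (2 * n) := by
    calc (1 : ℝ) = (2 : ℝ) ^ (2 * n * (k + 2)) * ((1 / 2 : ℝ) ^ (k + 2)) ^ (2 * n) := hkey.symm
      _ ≤ (2 : ℝ) ^ (2 * n * (k + 2)) * t ^ (2 * n) := by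
          apply mul_le_mul_of_nonneg_left _ (by positivity)
          exact pow_le_pow_left₀ (by positivity) h1 _
  have hlogt0 : Real.log t ≠ 0 := by
    intro h
    rw [h] at hlogt
    nlinarith
  rw [div_le_div_iff₀ (by positivity) (by positivity)]
  nlinarith [mul_le_mul h2t hlogsq (by positivity) (by positivity :
    (0 : ℝ) ≤ (2 : ℝ) ^ (2 * n * (k + 2)) * t ^ (2 * n))]

/-- The Basel-type sum `∑ 1/(k+1)²` is at most `2`. -/
lemma tsum_one_div_succ_sq_le : ∑' k : ℕ, 1 / ((k : ℝ) + 1) ^ 2 ≤ 2 := by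
  have hbasel : HasSum (fun n : ℕ => (1 : ℝ) / (n : ℝ) ^ 2) (Real.pi ^ 2 / 6) :=
    hasSum_zeta_two
  have hsummable := hbasel.summable
  have hsplit := Summable.sum_add_tsum_nat_add (f := fun n : ℕ => (1 : ℝ) / (n : ℝ) ^ 2) 1 hsummable
  have h0 : ∑ i ∈ Finset.range 1, (1 : ℝ) / (i : ℝ) ^ 2 = 0 := by simp
  have heq : (∑' k : ℕ, 1 / ((k : ℝ) + 1) ^ 2) = Real.pi ^ 2 / 6 := by
    rw [← hbasel.tsum_eq, ← hsplit, h0, zero_add]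
    congr 1
    ext k
    push_cast
    ring_nf
  rw [heq]
  nlinarith [Real.pi_lt_d2, Real.pi_gt_three]

lemma summable_one_div_succ_sq : Summable (fun k : ℕ => 1 / ((k : ℝ) + 1) ^ 2) := by
  have := (summable_nat_add_iff (f := fun n : ℕ => (1 : ℝ) / (n : ℝ) ^ 2) 1).2
    hasSum_zeta_two.summable
  refine this.congr fun k => ?_
  push_cast
  ring_nf

/-- Uniform bound for the integral of `1/(‖ζ - z‖^{2n} (log ‖ζ - z‖)²)` over the ball of
radius `1/2`, for a measure with an upper Ahlfors regularity bound of exponent `2n`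
(modelling the volume measure of an `n`-dimensional analytic subvariety of `ℂ^N`). -/
theorem integral_log_squared_bound
    (n N : ℕ) (hn : 1 ≤ n) (hN : 1 ≤ N) (C₀ R : ℝ) (hC₀ : 0 < C₀) (hR : 0 < R) :
    ∃ C : ℝ, 0 < C ∧
      ∀ [MeasurableSpace (EuclideanSpace ℂ (Fin N))]
        [BorelSpace (EuclideanSpace ℂ (Fin N))]
        (μ : Measure (EuclideanSpace ℂ (Fin N))),
        (∀ (w : EuclideanSpace ℂ (Fin N)) (ρ : ℝ), 0 < ρ → ρ ≤ R →
          μ (ball w ρ) ≤ ENNReal.ofReal (C₀ * ρ ^ (2 * n))) →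
        ∀ z : EuclideanSpace ℂ (Fin N),
          (∫⁻ ζ in ball z (1 / 2),
              ENNReal.ofReal (1 / (‖ζ - z‖ ^ (2 * n) * Real.log ‖ζ - z‖ ^ 2)) ∂μ) ≤
            ENNReal.ofReal C := by
  classical
  set r : ℝ := min R (1 / 2) with hr_def
  have hr0 : 0 < r := lt_min hR (by norm_num)
  have hrR : r ≤ R := min_le_left _ _
  have hlog2 : 0 < Real.log 2 := Real.log_pos one_lt_two
  -- covering of the ball of radius 1/2 by finitely many balls of radius r
  obtain ⟨s, hs⟩ := (isCompact_closedBall (0 : EuclideanSpace ℂ (Fin N)) (1 / 2)).elim_finite_subcover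
    (fun p : EuclideanSpace ℂ (Fin N) => ball p r) (fun p => isOpen_ball)
    (fun x _ => Set.mem_iUnion.mpr ⟨x, mem_ball_self hr0⟩)
  -- K such that (1/2)^(K+1) ≤ r
  obtain ⟨K, hK⟩ : ∃ K : ℕ, (1 / 2 : ℝ) ^ (K + 1) ≤ r := by
    obtain ⟨m, hm⟩ := exists_pow_lt_of_lt_one hr0 (by norm_num : (1 / 2 : ℝ) < 1)
    exact ⟨m, le_of_lt (lt_of_le_of_lt (pow_le_pow_of_le_one (by norm_num) (by norm_num)
      (Nat.le_succ m)) hm)⟩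
  set g : ℕ → ℝ := fun k => (2 : ℝ) ^ (2 * n * (k + 2)) / (((k : ℝ) + 1) ^ 2 * Real.log 2 ^ 2)
    with hg_def
  have hg_nonneg : ∀ k, 0 ≤ g k := fun k => by positivity
  set M₁ : ℝ := (s.card : ℝ) * (C₀ * r ^ (2 * n)) with hM₁_def
  have hM₁_nonneg : 0 ≤ M₁ := by positivity
  set ctail : ℝ := C₀ * 2 ^ (2 * n) / Real.log 2 ^ 2 with hctail_def
  have hctail_pos : 0 < ctail := by positivity
  refine ⟨(∑ k ∈ Finset.range K, g k) * M₁ + ctail * 2, ?_, ?_⟩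
  · have : 0 ≤ (∑ k ∈ Finset.range K, g k) * M₁ :=
      mul_nonneg (Finset.sum_nonneg fun k _ => hg_nonneg k) hM₁_nonneg
    nlinarith
  intro _ _ μ hμ z
  -- the covering bound for μ of any ball of radius 1/2
  have hball : μ (ball z (1 / 2)) ≤ ENNReal.ofReal M₁ := by
    have hsub : ball z (1 / 2) ⊆ ⋃ p ∈ s, ball (z + p) r := by
      intro ζ hζ
      have h1 : ζ - z ∈ closedBall (0 : EuclideanSpace ℂ (Fin N)) (1 / 2) := by
        rw [mem_closedBall, dist_zero_right]
        exact le_of_lt (by rwa [mem_ball, dist_eq_norm] at hζ)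
      obtain ⟨p, hp, hpball⟩ := Set.mem_iUnion₂.mp (hs h1)
      refine Set.mem_biUnion hp ?_
      rw [mem_ball, dist_eq_norm] at hpball ⊢
      have : ζ - (z + p) = ζ - z - p := by abel
      rwa [this]
    calc μ (ball z (1 / 2)) ≤ ∑ p ∈ s, μ (ball (z + p) r) :=
          (measure_mono hsub).trans (measure_biUnion_finset_le _ _)
      _ ≤ ∑ _p ∈ s, ENNReal.ofReal (C₀ * r ^ (2 * n)) :=
          Finset.sum_le_sum fun p _ => hμ _ r hr0 hrR
      _ = (s.card : ℝ≥0∞) * ENNReal.ofReal (C₀ * r ^ (2 * n)) := by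
          rw [Finset.sum_const, nsmul_eq_mul]
      _ = ENNReal.ofReal M₁ := by
          rw [hM₁_def, ENNReal.ofReal_mul (by positivity : (0:ℝ) ≤ (s.card : ℝ)),
            ENNReal.ofReal_natCast]
  -- dyadic annuli
  set A : ℕ → Set (EuclideanSpace ℂ (Fin N)) := fun k =>
    {ζ | ‖ζ - z‖ ∈ Set.Ico ((1 / 2 : ℝ) ^ (k + 2)) ((1 / 2 : ℝ) ^ (k + 1))} with hA_def
  have hmeasA : ∀ k, MeasurableSet (A k) := fun k =>
    ((continuous_id.sub continuous_const).norm.measurable) measurableSet_Ico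
  have hcover : ball z (1 / 2) ⊆ {z} ∪ ⋃ k, A k := by
    intro ζ hζ
    rcases eq_or_ne ζ z with h | h
    · exact Or.inl h
    · have ht0 : 0 < ‖ζ - z‖ := by
        rw [norm_pos_iff]
        exact sub_ne_zero_of_ne h
      have ht1 : ‖ζ - z‖ < 1 / 2 := by rwa [mem_ball, dist_eq_norm] at hζ
      obtain ⟨k, hk1, hk2⟩ := exists_dyadic_interval ht0 ht1
      exact Or.inr (Set.mem_iUnion.mpr ⟨k, ⟨hk1, hk2⟩⟩)
  set f : EuclideanSpace ℂ (Fin N) → ℝ≥0∞ := fun ζ =>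
    ENNReal.ofReal (1 / (‖ζ - z‖ ^ (2 * n) * Real.log ‖ζ - z‖ ^ 2)) with hf_def
  -- integral over the singleton is zero
  have hsingleton : ∫⁻ ζ in {z}, f ζ ∂μ = 0 := by
    have : ∀ ζ ∈ ({z} : Set (EuclideanSpace ℂ (Fin N))), f ζ ≤ 0 := by
      intro ζ hζ
      rw [Set.mem_singleton_iff] at hζ
      subst hζ
      have h2n : 2 * n ≠ 0 := by omega
      simp [hf_def, sub_self, norm_zero, zero_pow h2n]
    refine le_antisymm ?_ zero_le
    calc ∫⁻ ζ in {z}, f ζ ∂μ ≤ ∫⁻ _ in ({z} : Set (EuclideanSpace ℂ (Fin N))), (0 : ℝ≥0∞) ∂μ :=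
          setLIntegral_mono' (measurableSet_singleton z) this
      _ = 0 := by simp
  -- integral over each annulus
  have hannulus : ∀ k, ∫⁻ ζ in A k, f ζ ∂μ ≤ ENNReal.ofReal (g k) * μ (A k) := by
    intro k
    calc ∫⁻ ζ in A k, f ζ ∂μ ≤ ∫⁻ _ in A k, ENNReal.ofReal (g k) ∂μ := by
          refine setLIntegral_mono' (hmeasA k) fun ζ hζ => ?_
          obtain ⟨h1, h2⟩ := hζ
          exact ENNReal.ofReal_le_ofReal (dyadic_pointwise_bound n k hn h1 h2)
      _ = ENNReal.ofReal (g k) * μ (A k) := setLIntegral_const _ _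
  -- bounds on μ (A k)
  have hAsub : ∀ k, A k ⊆ ball z ((1 / 2 : ℝ) ^ (k + 1)) := by
    intro k ζ hζ
    rw [mem_ball, dist_eq_norm]
    exact hζ.2
  have hAball : ∀ k, μ (A k) ≤ ENNReal.ofReal M₁ := by
    intro k
    refine le_trans (measure_mono ?_) hball
    refine (hAsub k).trans (ball_subset_ball ?_)
    calc (1 / 2 : ℝ) ^ (k + 1) ≤ (1 / 2 : ℝ) ^ 1 :=
          pow_le_pow_of_le_one (by norm_num) (by norm_num) (by omega)
      _ = 1 / 2 := pow_one _
  have hAtail : ∀ k, K ≤ k → μ (A k) ≤ ENNReal.ofReal (C₀ * ((1 / 2 : ℝ) ^ (k + 1)) ^ (2 * n)) := by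
    intro k hk
    refine le_trans (measure_mono (hAsub k)) (hμ _ _ (by positivity) ?_)
    calc (1 / 2 : ℝ) ^ (k + 1) ≤ (1 / 2 : ℝ) ^ (K + 1) :=
          pow_le_pow_of_le_one (by norm_num) (by norm_num) (by omega)
      _ ≤ r := hK
      _ ≤ R := hrR
  -- per-term bound
  set b : ℕ → ℝ≥0∞ := fun k =>
    (if k < K then ENNReal.ofReal (g k * M₁) else 0) +
      ENNReal.ofReal (ctail * (1 / ((k : ℝ) + 1) ^ 2)) with hb_def
  have hterm : ∀ k, ENNReal.ofReal (g k) * μ (A k) ≤ b k := by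
    intro k
    rcases lt_or_ge k K with hk | hk
    · refine le_trans ?_ (le_add_right (le_of_eq (if_pos hk).symm))
      rw [ENNReal.ofReal_mul (hg_nonneg k)]
      exact mul_le_mul_right (hAball k) _
    · refine le_trans ?_ (le_add_left (le_refl _))
      have hμk := hAtail k hk
      calc ENNReal.ofReal (g k) * μ (A k)
          ≤ ENNReal.ofReal (g k) * ENNReal.ofReal (C₀ * ((1 / 2 : ℝ) ^ (k + 1)) ^ (2 * n)) :=
            mul_le_mul_right hμk _
        _ = ENNReal.ofReal (g k * (C₀ * ((1 / 2 : ℝ) ^ (k + 1)) ^ (2 * n))) :=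
            (ENNReal.ofReal_mul (hg_nonneg k)).symm
        _ = ENNReal.ofReal (ctail * (1 / ((k : ℝ) + 1) ^ 2)) := by
            congr 1
            simp only [hg_def, hctail_def]
            have hpow : ((1 / 2 : ℝ) ^ (k + 1)) ^ (2 * n) =
                ((2 : ℝ) ^ (2 * n * (k + 1)))⁻¹ := by
              rw [← pow_mul, mul_comm (k + 1) (2 * n), one_div, inv_pow]
            have hsplit : (2 : ℝ) ^ (2 * n * (k + 2)) =
                (2 : ℝ) ^ (2 * n) * (2 : ℝ) ^ (2 * n * (k + 1)) := by
              rw [← pow_add]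
              congr 1
              ring
            rw [hpow, hsplit]
            have h2pos : (0 : ℝ) < (2 : ℝ) ^ (2 * n * (k + 1)) := by positivity
            have hk1 : ((k : ℝ) + 1) ≠ 0 := by positivity
            field_simp
  -- summing up
  have htsum_b : ∑' k, b k ≤ ENNReal.ofReal ((∑ k ∈ Finset.range K, g k) * M₁ + ctail * 2) := by
    rw [hb_def, ENNReal.tsum_add]
    have h1 : (∑' k, if k < K then ENNReal.ofReal (g k * M₁) else 0)
        = ∑ k ∈ Finset.range K, ENNReal.ofReal (g k * M₁) := by
      rw [tsum_eq_sum (s := Finset.range K) (fun k hk => if_neg (by simpa using hk))]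
      exact Finset.sum_congr rfl fun k hk => if_pos (Finset.mem_range.mp hk)
    have h2 : (∑' (k : ℕ), ENNReal.ofReal (ctail * (1 / ((k : ℝ) + 1) ^ 2)))
        ≤ ENNReal.ofReal (ctail * 2) := by
      have : ∀ k : ℕ, ENNReal.ofReal (ctail * (1 / ((k : ℝ) + 1) ^ 2))
          = ENNReal.ofReal ctail * ENNReal.ofReal (1 / ((k : ℝ) + 1) ^ 2) := fun k =>
        ENNReal.ofReal_mul hctail_pos.le
      rw [tsum_congr this, ENNReal.tsum_mul_left,
        ← ENNReal.ofReal_tsum_of_nonneg (fun k => by positivity) summable_one_div_succ_sq,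
        ENNReal.ofReal_mul hctail_pos.le]
      exact mul_le_mul_right (ENNReal.ofReal_le_ofReal tsum_one_div_succ_sq_le) _
    rw [h1]
    calc (∑ k ∈ Finset.range K, ENNReal.ofReal (g k * M₁)) +
          ∑' (k : ℕ), ENNReal.ofReal (ctail * (1 / ((k : ℝ) + 1) ^ 2))
        ≤ ENNReal.ofReal (∑ k ∈ Finset.range K, g k * M₁) + ENNReal.ofReal (ctail * 2) := by
          refine add_le_add (le_of_eq ?_) h2
          rw [ENNReal.ofReal_sum_of_nonneg (fun k _ => mul_nonneg (hg_nonneg k) hM₁_nonneg)]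
      _ = ENNReal.ofReal ((∑ k ∈ Finset.range K, g k) * M₁ + ctail * 2) := by
          rw [← ENNReal.ofReal_add (Finset.sum_nonneg fun k _ =>
            mul_nonneg (hg_nonneg k) hM₁_nonneg) (by positivity), ← Finset.sum_mul]
  calc ∫⁻ ζ in ball z (1 / 2), f ζ ∂μ
      ≤ ∫⁻ ζ in {z} ∪ ⋃ k, A k, f ζ ∂μ := lintegral_mono_set hcover
    _ ≤ (∫⁻ ζ in {z}, f ζ ∂μ) + ∫⁻ ζ in ⋃ k, A k, f ζ ∂μ := lintegral_union_le _ _ _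
    _ ≤ 0 + ∑' k, ∫⁻ ζ in A k, f ζ ∂μ :=
        add_le_add (le_of_eq hsingleton) (lintegral_iUnion_le _ _)
    _ = ∑' k, ∫⁻ ζ in A k, f ζ ∂μ := zero_add _
    _ ≤ ∑' k, b k := ENNReal.tsum_le_tsum fun k => le_trans (hannulus k) (hterm k)
    _ ≤ ENNReal.ofReal ((∑ k ∈ Finset.range K, g k) * M₁ + ctail * 2) := htsum_b
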